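/- For any CGS G, state q, BSL state formula φ, assignment χ for φ, set of agents A ⊆ Ag, and agents a_{i_1},…,a_{i_k} ∈ A: G, χ, q ⊨_SL tr_A(φ) if and only if G, χ[a_{i_1}↦?,…,a_{i_k}↦?], q ⊨_SL tr_A(φ), where χ[a↦?] removes a from the domain of χ. -/

import Mathlib

/-- A concurrent game structure: transition function, initial state, valuation. -/
structure CGS (S Ag Act AP : Type) where
  δ : S → (Ag → Act) → S
  init : S
  val : S → AP → Prop

variable {S Ag Act AP Var : Type}

/-- An initial (finite) path: a start state together with the list of decisions taken. -/
abbrev FPath (S Ag Act : Type) := S × List (Ag → Act)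

/-- Last state of an initial path. -/
def CGS.lastState (G : CGS S Ag Act AP) (ρ : FPath S Ag Act) : S :=
  ρ.2.foldl G.δ ρ.1

/-- A strategy assigns an action to every initial path. -/
abbrev Strat (S Ag Act : Type) := FPath S Ag Act → Act

/-- Concatenation of initial paths (meaningful when `G.lastState ρ = ρ'.1`,
i.e. they are glued at the shared state). -/
def FPath.concat (ρ ρ' : FPath S Ag Act) : FPath S Ag Act := (ρ.1, ρ.2 ++ ρ'.2)

/-- The finite prefix with `n` decisions of the play from `q` whose decision stream is `d`. -/
def prefixPath (q : S) (d : ℕ → Ag → Act) (n : ℕ) : FPath S Ag Act :=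
  (q, List.ofFn fun i : Fin n => d i)

/-- The state reached after `i` steps of the play from `q` with decision stream `d`. -/
def stateAt (G : CGS S Ag Act AP) (q : S) (d : ℕ → Ag → Act) (i : ℕ) : S :=
  G.lastState (prefixPath q d i)

/-- An assignment: a partial map from agents and variables to strategies. -/
abbrev Assign (S Ag Act Var : Type) := Ag ⊕ Var → Option (Strat S Ag Act)

/-- The outcome of an assignment from a state: the set of plays (identified with
their decision streams) compatible with all strategies assigned to agents. -/
def outcome (G : CGS S Ag Act AP) (q : S) (χ : Assign S Ag Act Var) :
    Set (ℕ → Ag → Act) :=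
  {d | ∀ (k : ℕ) (a : Ag) (σ : Strat S Ag Act),
      χ (Sum.inl a) = some σ → d k a = σ (prefixPath q d k)}

/-- The `ρ`-translation of a strategy. -/
def transStrat [DecidableEq S] (G : CGS S Ag Act AP) (ρ : FPath S Ag Act)
    (σ : Strat S Ag Act) : Strat S Ag Act :=
  fun ρ' => if ρ'.1 = G.lastState ρ then σ (ρ.concat ρ') else σ ρ'

/-- The `ρ`-translation of an assignment. -/
def transAssign [DecidableEq S] (G : CGS S Ag Act AP) (ρ : FPath S Ag Act)
    (χ : Assign S Ag Act Var) : Assign S Ag Act Var :=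
  fun l => (χ l).map (transStrat G ρ)

/-- Syntax of Strategy Logic (SL). -/
inductive SLForm (AP Ag Var : Type) : Type where
  | atom : AP → SLForm AP Ag Var
  | neg  : SLForm AP Ag Var → SLForm AP Ag Var
  | or   : SLForm AP Ag Var → SLForm AP Ag Var → SLForm AP Ag Var
  | next : SLForm AP Ag Var → SLForm AP Ag Var
  | untl : SLForm AP Ag Var → SLForm AP Ag Var → SLForm AP Ag Var
  | exi  : Var → SLForm AP Ag Var → SLForm AP Ag Var
  | bind : Ag → Var → SLForm AP Ag Var → SLForm AP Ag Var

mutual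
/-- State formulas of Branching-time Strategy Logic (BSL). -/
inductive BSLForm (AP Ag Var : Type) : Type where
  | atom : AP → BSLForm AP Ag Var
  | neg  : BSLForm AP Ag Var → BSLForm AP Ag Var
  | or   : BSLForm AP Ag Var → BSLForm AP Ag Var → BSLForm AP Ag Var
  | exi  : Var → BSLForm AP Ag Var → BSLForm AP Ag Var
  | bind : Ag → Var → BSLForm AP Ag Var → BSLForm AP Ag Var
  | unbind : Ag → BSLForm AP Ag Var → BSLForm AP Ag Var
  | pathE : BSLPath AP Ag Var → BSLForm AP Ag Var
/-- Path formulas of BSL. -/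
inductive BSLPath (AP Ag Var : Type) : Type where
  | state : BSLForm AP Ag Var → BSLPath AP Ag Var
  | neg   : BSLPath AP Ag Var → BSLPath AP Ag Var
  | or    : BSLPath AP Ag Var → BSLPath AP Ag Var → BSLPath AP Ag Var
  | next  : BSLPath AP Ag Var → BSLPath AP Ag Var
  | untl  : BSLPath AP Ag Var → BSLPath AP Ag Var → BSLPath AP Ag Var
end

/-- Semantics of SL. Temporal operators are evaluated on an outcome play of the
current assignment (for complete assignments — the only case where the SL
semantics is defined — this play is unique), with the assignment translated
along the play. -/
def SLsat [DecidableEq S] [DecidableEq Ag] [DecidableEq Var] (G : CGS S Ag Act AP) :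
    Assign S Ag Act Var → S → SLForm AP Ag Var → Prop
  | χ, q, .atom p => G.val q p
  | χ, q, .neg φ => ¬ SLsat G χ q φ
  | χ, q, .or φ φ' => SLsat G χ q φ ∨ SLsat G χ q φ'
  | χ, q, .exi x φ =>
      ∃ σ : Strat S Ag Act, SLsat G (Function.update χ (Sum.inr x) (some σ)) q φ
  | χ, q, .bind a x φ => SLsat G (Function.update χ (Sum.inl a) (χ (Sum.inr x))) q φ
  | χ, q, .next φ => ∃ d ∈ outcome G q χ,
      SLsat G (transAssign G (prefixPath q d 1) χ) (stateAt G q d 1) φ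
  | χ, q, .untl φ φ' => ∃ d ∈ outcome G q χ, ∃ j : ℕ,
      SLsat G (transAssign G (prefixPath q d j) χ) (stateAt G q d j) φ' ∧
      ∀ k < j, SLsat G (transAssign G (prefixPath q d k) χ) (stateAt G q d k) φ

mutual
/-- Semantics of BSL state formulas, at a state under an assignment. -/
def BSLsat [DecidableEq S] [DecidableEq Ag] [DecidableEq Var] (G : CGS S Ag Act AP)
    (χ : Assign S Ag Act Var) (q : S) : BSLForm AP Ag Var → Prop
  | .atom p => G.val q p
  | .neg φ => ¬ BSLsat G χ q φ
  | .or φ φ' => BSLsat G χ q φ ∨ BSLsat G χ q φ'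
  | .exi x φ =>
      ∃ σ : Strat S Ag Act, BSLsat G (Function.update χ (Sum.inr x) (some σ)) q φ
  | .bind a x φ => BSLsat G (Function.update χ (Sum.inl a) (χ (Sum.inr x))) q φ
  | .unbind a φ => BSLsat G (Function.update χ (Sum.inl a) none) q φ
  | .pathE ψ => ∃ d ∈ outcome G q χ, BSLsatP G χ q d 0 ψ

/-- Semantics of BSL path formulas, on the play from `q` with decision stream
`d`, at position `i`; the assignment is translated by the prefix as state
formulas are evaluated. -/
def BSLsatP [DecidableEq S] [DecidableEq Ag] [DecidableEq Var] (G : CGS S Ag Act AP)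
    (χ : Assign S Ag Act Var) (q : S) (d : ℕ → Ag → Act) (i : ℕ) :
    BSLPath AP Ag Var → Prop
  | .state φ => BSLsat G (transAssign G (prefixPath q d i) χ) (stateAt G q d i) φ
  | .neg ψ => ¬ BSLsatP G χ q d i ψ
  | .or ψ ψ' => BSLsatP G χ q d i ψ ∨ BSLsatP G χ q d i ψ'
  | .next ψ => BSLsatP G χ q d (i + 1) ψ
  | .untl ψ ψ' => ∃ j, i ≤ j ∧ BSLsatP G χ q d j ψ' ∧
      ∀ k, i ≤ k → k < j → BSLsatP G χ q d k ψ
end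

/-- Free variables of an SL formula. -/
def SLfree : SLForm AP Ag Var → Set Var
  | .atom _ => ∅
  | .neg φ => SLfree φ
  | .or φ φ' => SLfree φ ∪ SLfree φ'
  | .next φ => SLfree φ
  | .untl φ φ' => SLfree φ ∪ SLfree φ'
  | .exi x φ => SLfree φ \ {x}
  | .bind _ x φ => insert x (SLfree φ)

mutual
/-- Free variables of a BSL state formula. -/
def BSLfree : BSLForm AP Ag Var → Set Var
  | .atom _ => ∅
  | .neg φ => BSLfree φ
  | .or φ φ' => BSLfree φ ∪ BSLfree φ'
  | .exi x φ => BSLfree φ \ {x}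
  | .bind _ x φ => insert x (BSLfree φ)
  | .unbind _ φ => BSLfree φ
  | .pathE ψ => BSLfreeP ψ
/-- Free variables of a BSL path formula. -/
def BSLfreeP : BSLPath AP Ag Var → Set Var
  | .state φ => BSLfree φ
  | .neg ψ => BSLfreeP ψ
  | .or ψ ψ' => BSLfreeP ψ ∪ BSLfreeP ψ'
  | .next ψ => BSLfreeP ψ
  | .untl ψ ψ' => BSLfreeP ψ ∪ BSLfreeP ψ'
end

/-- `SLdefFor A φ` holds when the SL semantics of `φ` is defined in every
assignment whose agent-domain is `A`: every temporal operator is only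
evaluated under a complete assignment (every agent being bound on the way). -/
def SLdefFor (A : Set Ag) : SLForm AP Ag Var → Prop
  | .atom _ => True
  | .neg φ => SLdefFor A φ
  | .or φ φ' => SLdefFor A φ ∧ SLdefFor A φ'
  | .exi _ φ => SLdefFor A φ
  | .bind a _ φ => SLdefFor (insert a A) φ
  | .next φ => A = Set.univ ∧ SLdefFor A φ
  | .untl φ φ' => A = Set.univ ∧ SLdefFor A φ ∧ SLdefFor A φ'

/-- The translation `tr : SL → BSL`, inserting a path quantifier in front of
each temporal operator and homomorphic elsewhere. -/
def tr : SLForm AP Ag Var → BSLForm AP Ag Var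
  | .atom p => .atom p
  | .neg φ => .neg (tr φ)
  | .or φ φ' => .or (tr φ) (tr φ')
  | .next φ => .pathE (.next (.state (tr φ)))
  | .untl φ φ' => .pathE (.untl (.state (tr φ)) (.state (tr φ')))
  | .exi x φ => .exi x (tr φ)
  | .bind a x φ => .bind a x (tr φ)

mutual
/-- `φ` avoids the fresh variables (those of the form `Sum.inr a`) used by the
translation `tr_A`. -/
def BSLavoidsFresh : BSLForm AP Ag (Var ⊕ Ag) → Prop
  | .atom _ => True
  | .neg φ => BSLavoidsFresh φ
  | .or φ φ' => BSLavoidsFresh φ ∧ BSLavoidsFresh φ'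
  | .exi x φ => x.isLeft ∧ BSLavoidsFresh φ
  | .bind _ x φ => x.isLeft ∧ BSLavoidsFresh φ
  | .unbind _ φ => BSLavoidsFresh φ
  | .pathE ψ => BSLavoidsFreshP ψ
def BSLavoidsFreshP : BSLPath AP Ag (Var ⊕ Ag) → Prop
  | .state φ => BSLavoidsFresh φ
  | .neg ψ => BSLavoidsFreshP ψ
  | .or ψ ψ' => BSLavoidsFreshP ψ ∧ BSLavoidsFreshP ψ'
  | .next ψ => BSLavoidsFreshP ψ
  | .untl ψ ψ' => BSLavoidsFreshP ψ ∧ BSLavoidsFreshP ψ'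
end

/-- Prefix a formula with the bindings `(a, x_a)` for all agents `a` in `l`. -/
def bindList (l : List Ag) (φ : SLForm AP Ag (Var ⊕ Ag)) : SLForm AP Ag (Var ⊕ Ag) :=
  l.foldr (fun a ψ => .bind a (Sum.inr a) ψ) φ

/-- Prefix a formula with the strategy quantifications `⟨⟨x_a⟩⟩` for `a ∈ l`. -/
def quantList (l : List Ag) (φ : SLForm AP Ag (Var ⊕ Ag)) : SLForm AP Ag (Var ⊕ Ag) :=
  l.foldr (fun a ψ => .exi (Sum.inr a) ψ) φ

noncomputable section

mutual
/-- The translation `tr_A : BSL → SL`, parameterized by the set `A` of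
currently unbound agents; each fresh variable for agent `a` is `Sum.inr a`. -/
def trA [DecidableEq Ag] (A : Finset Ag) :
    BSLForm AP Ag (Var ⊕ Ag) → SLForm AP Ag (Var ⊕ Ag)
  | .atom p => .atom p
  | .neg φ => .neg (trA A φ)
  | .or φ φ' => .or (trA A φ) (trA A φ')
  | .exi x φ => .exi x (trA A φ)
  | .bind a x φ => .bind a x (trA (A.erase a) φ)
  | .unbind a φ => trA (insert a A) φ
  | .pathE ψ => quantList A.toList (bindList A.toList (trAP A ψ))
/-- The homomorphic extension of `tr_A` to BSL path formulas. -/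
def trAP [DecidableEq Ag] (A : Finset Ag) :
    BSLPath AP Ag (Var ⊕ Ag) → SLForm AP Ag (Var ⊕ Ag)
  | .state φ => trA A φ
  | .neg ψ => .neg (trAP A ψ)
  | .or ψ ψ' => .or (trAP A ψ) (trAP A ψ')
  | .next ψ => .next (trAP A ψ)
  | .untl ψ ψ' => .untl (trAP A ψ) (trAP A ψ')
end
end

/-- Remove the listed agents from the domain of an assignment. -/
def removes [DecidableEq Ag] [DecidableEq V] (χ : Assign S Ag Act V) :
    List Ag → Assign S Ag Act V
  | [] => χ
  | a :: l => Function.update (removes χ l) (Sum.inl a) none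

section Aux

variable [DecidableEq S] [DecidableEq Ag] [DecidableEq Var]

/-- Apply the bindings for agents in `l` to an assignment. -/
def applyBinds (χ : Assign S Ag Act (Var ⊕ Ag)) : List Ag → Assign S Ag Act (Var ⊕ Ag)
  | [] => χ
  | a :: l => applyBinds (Function.update χ (Sum.inl a) (χ (Sum.inr (Sum.inr a)))) l

lemma applyBinds_eq (l : List Ag) : ∀ (χ : Assign S Ag Act (Var ⊕ Ag)) (s : Ag ⊕ (Var ⊕ Ag)),
    applyBinds χ l s =
      match s with
      | Sum.inl a => if a ∈ l then χ (Sum.inr (Sum.inr a)) else χ (Sum.inl a)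
      | Sum.inr v => χ (Sum.inr v) := by
  induction l with
  | nil => intro χ s; cases s <;> simp [applyBinds]
  | cons a l ih =>
    intro χ s
    rw [applyBinds, ih]
    cases s with
    | inr v => simp [Function.update_apply]
    | inl b =>
      by_cases hbl : b ∈ l
      · simp [hbl, Function.update_apply]
      · by_cases hba : b = a
        · subst hba; simp [hbl, Function.update_apply]
        · simp [hbl, hba, Function.update_apply]

lemma bindList_sat (G : CGS S Ag Act AP) (q : S) (F : SLForm AP Ag (Var ⊕ Ag))
    (l : List Ag) : ∀ (χ : Assign S Ag Act (Var ⊕ Ag)),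
    SLsat G χ q (bindList l F) ↔ SLsat G (applyBinds χ l) q F := by
  induction l with
  | nil => intro χ; rfl
  | cons a l ih =>
    intro χ
    show SLsat G _ q (.bind a (Sum.inr a) (bindList l F)) ↔ _
    rw [SLsat, applyBinds]
    exact ih _

lemma quant_inv (G : CGS S Ag Act AP) (q : S) (L : List Ag) (F : SLForm AP Ag (Var ⊕ Ag))
    (l : List Ag) : ∀ (χ χ' : Assign S Ag Act (Var ⊕ Ag)),
    (∀ v, χ (Sum.inr v) = χ' (Sum.inr v)) →
    (∀ a, a ∉ L → χ (Sum.inl a) = χ' (Sum.inl a)) →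
    (SLsat G χ q (quantList l (bindList L F)) ↔ SLsat G χ' q (quantList l (bindList L F))) := by
  induction l with
  | nil =>
    intro χ χ' hr hL
    show SLsat G χ q (bindList L F) ↔ SLsat G χ' q (bindList L F)
    rw [bindList_sat, bindList_sat]
    have : applyBinds χ L = applyBinds χ' L := by
      funext s
      rw [applyBinds_eq, applyBinds_eq]
      cases s with
      | inr v => exact hr v
      | inl b =>
        by_cases hb : b ∈ L
        · simp [hb, hr]
        · simp [hb, hL b hb]
    rw [this]
  | cons a l ih =>
    intro χ χ' hr hL
    show SLsat G χ q (.exi (Sum.inr a) _) ↔ SLsat G χ' q (.exi (Sum.inr a) _)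
    rw [SLsat, SLsat]
    constructor <;> rintro ⟨σ, h⟩ <;> refine ⟨σ, ?_⟩
    · refine (ih _ _ ?_ ?_).mp h
      · intro v; rw [Function.update_apply, Function.update_apply, hr v]
      · intro b hb; simp [Function.update_apply]; exact hL b hb
    · refine (ih _ _ ?_ ?_).mpr h
      · intro v; rw [Function.update_apply, Function.update_apply, hr v]
      · intro b hb; simp [Function.update_apply]; exact hL b hb

/-- Invariance: `tr_A(φ)` does not depend on the strategies assigned to agents of `A`. -/
theorem trA_inv (G : CGS S Ag Act AP) (q : S) :
    ∀ (φ : BSLForm AP Ag (Var ⊕ Ag)) (A : Finset Ag) (χ χ' : Assign S Ag Act (Var ⊕ Ag)),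
    (∀ v, χ (Sum.inr v) = χ' (Sum.inr v)) →
    (∀ a, a ∉ A → χ (Sum.inl a) = χ' (Sum.inl a)) →
    (SLsat G χ q (trA A φ) ↔ SLsat G χ' q (trA A φ))
  | .atom p, A, χ, χ', hr, hA => by rw [trA]; rfl
  | .neg φ, A, χ, χ', hr, hA => by
    rw [trA]
    show ¬ _ ↔ ¬ _
    rw [trA_inv G q φ A χ χ' hr hA]
  | .or φ φ', A, χ, χ', hr, hA => by
    rw [trA]
    show _ ∨ _ ↔ _ ∨ _
    rw [trA_inv G q φ A χ χ' hr hA, trA_inv G q φ' A χ χ' hr hA]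
  | .exi x φ, A, χ, χ', hr, hA => by
    rw [trA]
    show (∃ σ, _) ↔ (∃ σ, _)
    constructor <;> rintro ⟨σ, h⟩ <;> refine ⟨σ, ?_⟩
    · refine (trA_inv G q φ A _ _ ?_ ?_).mp h
      · intro v; rw [Function.update_apply, Function.update_apply, hr v]
      · intro b hb; simp [Function.update_apply]; exact hA b hb
    · refine (trA_inv G q φ A _ _ ?_ ?_).mpr h
      · intro v; rw [Function.update_apply, Function.update_apply, hr v]
      · intro b hb; simp [Function.update_apply]; exact hA b hb
  | .bind a x φ, A, χ, χ', hr, hA => by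
    rw [trA]
    show SLsat G (Function.update χ (Sum.inl a) (χ (Sum.inr x))) q _ ↔
      SLsat G (Function.update χ' (Sum.inl a) (χ' (Sum.inr x))) q _
    refine trA_inv G q φ (A.erase a) _ _ ?_ ?_
    · intro v; simp [Function.update_apply]; exact hr v
    · intro b hb
      rw [Finset.mem_erase] at hb
      push_neg at hb
      by_cases hba : b = a
      · subst hba; simp [Function.update_apply, hr x]
      · simp [Function.update_apply, hba]; exact hA b (hb hba)
  | .unbind a φ, A, χ, χ', hr, hA => by
    rw [trA]
    refine trA_inv G q φ (insert a A) χ χ' hr ?_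
    intro b hb
    rw [Finset.mem_insert] at hb
    push_neg at hb
    exact hA b hb.2
  | .pathE ψ, A, χ, χ', hr, hA => by
    rw [trA]
    refine quant_inv G q A.toList _ A.toList χ χ' hr ?_
    intro b hb
    rw [Finset.mem_toList] at hb
    exact hA b hb

lemma removes_inr (χ : Assign S Ag Act (Var ⊕ Ag)) (l : List Ag) (v : Var ⊕ Ag) :
    removes χ l (Sum.inr v) = χ (Sum.inr v) := by
  induction l with
  | nil => rfl
  | cons a l ih => rw [removes]; simp [Function.update_apply, ih]

lemma removes_inl (χ : Assign S Ag Act (Var ⊕ Ag)) (l : List Ag) (a : Ag) (ha : a ∉ l) :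
    removes χ l (Sum.inl a) = χ (Sum.inl a) := by
  induction l with
  | nil => rfl
  | cons b l ih =>
    rw [removes]
    have hab : a ≠ b := fun h => ha (h ▸ (List.mem_cons_self : b ∈ b :: l))
    simp [Function.update_apply, hab]
    exact ih (fun h => ha (List.mem_cons_of_mem b h))

end Aux

/-- the truth value of `tr_A(φ)` is unaffected by unbinding any
agents of `A`. -/
theorem statement_6 [DecidableEq S] [DecidableEq Ag] [DecidableEq Var]
    (G : CGS S Ag Act AP) (q : S) (A : Finset Ag)
    (φ : BSLForm AP Ag (Var ⊕ Ag)) (havoid : BSLavoidsFresh φ)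
    (χ : Assign S Ag Act (Var ⊕ Ag))
    (hfor : ∀ x ∈ BSLfree φ, (χ (Sum.inr x)).isSome)
    (l : List Ag) (hl : ∀ a ∈ l, a ∈ A) :
    SLsat G χ q (trA A φ) ↔ SLsat G (removes χ l) q (trA A φ) := by
  refine trA_inv G q φ A χ (removes χ l) (fun v => (removes_inr χ l v).symm) ?_
  intro a ha
  exact (removes_inl χ l a (fun h => ha (hl a h))).symm
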